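/- arXiv:math/0605737 — 3 statements merged into one kernel-verified Lean document; each statement's English description precedes it below -/
import Mathlib

section
/- Let R* = H*(B) be the cohomology of a closed 4-manifold B and M* the free R-module with basis 1, u, …, uⁿ, made into a ring by u^{n+1} = β₄ u^{n−1} + β₂ uⁿ (β₂ ∈ H²(B), β₄ ∈ H⁴(B)), grading deg u = 2. Suppose 1 ≤ k < n and n − k is odd. If α = b₃ u^{(n−k−1)/2} + b₁ u^{(n−k+1)/2} with b₁ ∈ H¹(B), b₃ ∈ H³(B) satisfies (x+u)^k α = 0 for x ∈ H²(B), then b₁ = 0 and b₃ = 0. -/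
open Polynomial

private lemma pow_mul_aux {R : Type*} [CommRing R] (x b : R) (hb : b * x ^ 2 = 0) :
    ∀ k : ℕ, C b * (C x + X) ^ k = C b * X ^ k + k • (C (x * b) * X ^ (k - 1))
  | 0 => by simp
  | (k + 1) => by
    have hxb : x * (x * b) = 0 := by
      have : x * (x * b) = b * x ^ 2 := by ring
      rw [this, hb]
    rw [pow_succ, ← mul_assoc, pow_mul_aux x b hb k]
    cases k with
    | zero => simp [C_mul]; ring
    | succ m =>
      have : (m + 1 : ℕ) • (C (x * b) * X ^ (m + 1 - 1)) * (C x + X)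
          = C (x * (x*b)) * ((m+1 : ℕ) • X ^ m) + (m+1 : ℕ) • (C (x*b) * X ^ (m+1)) := by
        simp only [nsmul_eq_mul, Nat.add_sub_cancel, C_mul]; push_cast; ring
      rw [add_mul, this, hxb]
      simp only [map_zero, zero_mul, add_zero]
      have h2 : C b * X ^ (m+1) * (C x + X)
          = C (x * b) * X ^ (m+1) + C b * X ^ (m+1+1) := by rw [C_mul]; ring
      rw [h2]
      simp only [Nat.add_sub_cancel, succ_nsmul, nsmul_eq_mul]
      ring

/-- `H*(M)` is modelled as the free `H*(B)`-module with basis `1, u, …, uⁿ` and ring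
relation `u^{n+1} = β₄ u^{n-1} + β₂ uⁿ`, i.e. as `R[u]/(u^{n+1} - β₂ uⁿ - β₄ u^{n-1})`.
For `1 ≤ k < n` with `n - k` odd, if `α = b₃ u^{(n-k-1)/2} + b₁ u^{(n-k+1)/2}`
(with `x³ = 0` and `b·x² = 0` for positive-degree base classes `b`, as `dim B = 4`)
satisfies `(x+u)^k α = 0`, then `b₁ = 0` and `b₃ = 0`. -/
theorem stmt_11 {R : Type*} [CommRing R] (n k : ℕ) (hk1 : 1 ≤ k) (hk2 : k < n)
    (hodd : Odd (n - k))
    (x β₂ β₄ b₁ b₃ : R)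
    (hx : x ^ 3 = 0) (hb1 : b₁ * x ^ 2 = 0) (hb3 : b₃ * x ^ 2 = 0)
    (p : R[X]) (hp : p = X ^ (n + 1) - C β₂ * X ^ n - C β₄ * X ^ (n - 1))
    (h : ((AdjoinRoot.of p x + AdjoinRoot.root p) ^ k)
        * (AdjoinRoot.of p b₃ * AdjoinRoot.root p ^ ((n - k - 1) / 2)
            + AdjoinRoot.of p b₁ * AdjoinRoot.root p ^ ((n - k + 1) / 2)) = 0) :
    b₁ = 0 ∧ b₃ = 0 := by
  nontriviality R
  obtain ⟨t, ht⟩ := hodd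
  have hn : n = k + 2 * t + 1 := by omega
  subst hn
  have hm3 : (k + 2 * t + 1 - k - 1) / 2 = t := by omega
  have hm1 : (k + 2 * t + 1 - k + 1) / 2 = t + 1 := by omega
  rw [hm3, hm1] at h
  -- rewrite h as `AdjoinRoot.mk p Q = 0`
  set Q : R[X] := (C x + X) ^ k * (C b₃ * X ^ t + C b₁ * X ^ (t + 1)) with hQ
  have hmk : AdjoinRoot.mk p Q = 0 := by
    rw [hQ]
    simp only [map_mul, map_add, map_pow, AdjoinRoot.mk_X, ← AdjoinRoot.mk_C]
    rw [← h]
    rfl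
  have hdvd : p ∣ Q := (AdjoinRoot.mk_eq_zero).1 hmk
  -- compute Q explicitly
  have hQ' : Q = C ((k : R) * (x * b₃)) * X ^ (k - 1 + t)
      + C (b₃ + x * b₁ * (k : R)) * X ^ (k + t) + C b₁ * X ^ (k + t + 1) := by
    rw [hQ]
    have e3 := pow_mul_aux x b₃ hb3 k
    have e1 := pow_mul_aux x b₁ hb1 k
    have hlhs : (C x + X) ^ k * (C b₃ * X ^ t + C b₁ * X ^ (t + 1))
        = (C b₃ * (C x + X) ^ k) * X ^ t + (C b₁ * (C x + X) ^ k) * X ^ (t + 1) := by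
      ring
    rw [hlhs, e3, e1]
    have hXk : (X : R[X]) ^ k = X * X ^ (k - 1) := by
      calc (X : R[X]) ^ k = X ^ (1 + (k - 1)) := by congr 1; omega
        _ = X * X ^ (k - 1) := by rw [pow_add, pow_one]
    simp only [nsmul_eq_mul, pow_add, C_mul, C_add, map_natCast, hXk]
    ring
  -- p is monic of degree k + 2t + 2
  set n := k + 2 * t + 1 with hn
  have hp2 : p = X ^ (n + 1) - (C β₂ * X ^ n + C β₄ * X ^ (n - 1)) := by rw [hp]; ring
  have hdeglt : (C β₂ * X ^ n + C β₄ * X ^ (n - 1)).degree < ((n + 1 : ℕ) : WithBot ℕ) := by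
    apply lt_of_le_of_lt (degree_add_le _ _)
    apply max_lt <;> apply lt_of_le_of_lt (degree_C_mul_X_pow_le _ _) <;>
      exact_mod_cast by omega
  have hmonic : p.Monic := by rw [hp2]; exact monic_X_pow_sub hdeglt
  have hdegp : p.natDegree = n + 1 := by
    rw [hp2]
    have : (X ^ (n + 1) - (C β₂ * X ^ n + C β₄ * X ^ (n - 1)) : R[X]).degree
        = ((n + 1 : ℕ) : WithBot ℕ) := by
      rw [degree_sub_eq_left_of_degree_lt (by rwa [degree_X_pow])]
      exact degree_X_pow _
    exact natDegree_eq_of_degree_eq_some this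
  have hQ0 : Q = 0 := by
    by_contra hne
    refine hmonic.not_dvd_of_natDegree_lt hne ?_ hdvd
    rw [hdegp, hQ']
    have h1 : (C ((k : R) * (x * b₃)) * X ^ (k - 1 + t)).natDegree ≤ k + t := by
      apply le_trans (natDegree_C_mul_le _ _); rw [natDegree_X_pow]; omega
    have h2 : (C (b₃ + x * b₁ * (k : R)) * X ^ (k + t)).natDegree ≤ k + t := by
      apply le_trans (natDegree_C_mul_le _ _); rw [natDegree_X_pow]
    have h3 : (C b₁ * X ^ (k + t + 1)).natDegree ≤ k + t + 1 := by
      apply le_trans (natDegree_C_mul_le _ _); rw [natDegree_X_pow]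
    have := natDegree_add_le (C ((k : R) * (x * b₃)) * X ^ (k - 1 + t)
      + C (b₃ + x * b₁ * (k : R)) * X ^ (k + t)) (C b₁ * X ^ (k + t + 1))
    have := natDegree_add_le (C ((k : R) * (x * b₃)) * X ^ (k - 1 + t))
      (C (b₃ + x * b₁ * (k : R)) * X ^ (k + t))
    omega
  rw [hQ'] at hQ0
  have hcoeff : ∀ m : ℕ, (C ((k : R) * (x * b₃)) * X ^ (k - 1 + t)
      + C (b₃ + x * b₁ * (k : R)) * X ^ (k + t) + C b₁ * X ^ (k + t + 1)).coeff m = 0 := by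
    intro m; rw [hQ0]; simp
  have hb₁ : b₁ = 0 := by
    have := hcoeff (k + t + 1)
    have e1 : ¬(k + t + 1 = k - 1 + t) := by omega
    have e2 : ¬(k + t + 1 = k + t) := by omega
    simpa only [coeff_add, coeff_C_mul, coeff_X_pow, e1, e2, if_false, if_true,
      eq_self_iff_true, mul_zero, mul_one, zero_add, add_zero] using this
  have hb₃ : b₃ = 0 := by
    have := hcoeff (k + t)
    have e1 : ¬(k + t = k - 1 + t) := by omega
    have e2 : ¬(k + t = k + t + 1) := by omega
    simp only [coeff_add, coeff_C_mul, coeff_X_pow, e1, e2, if_false, if_true,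
      eq_self_iff_true, mul_zero, mul_one, zero_add, add_zero] at this
    rw [hb₁] at this
    simpa using this
  exact ⟨hb₁, hb₃⟩
end

section
/- With the same graded ring as above, suppose 1 ≤ k < n and n − k is even. If α = b₄ u^{(n−k−2)/2} + b₂ u^{(n−k)/2} + b₀ u^{(n−k+2)/2} with b₀ ∈ H⁰(B), b₂ ∈ H²(B), b₄ ∈ H⁴(B) satisfies (x+u)^k α = 0, then b₀ = b₂ = b₄ = 0. -/
open Polynomial

/-- Same graded ring `H*(M) = R[u]/(u^{n+1} - β₂ uⁿ - β₄ u^{n-1})` as before.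
For `1 ≤ k < n` with `n - k` even, if
`α = b₄ u^{(n-k-2)/2} + b₂ u^{(n-k)/2} + b₀ u^{(n-k+2)/2}` (with `x³ = 0`,
`b₂ x² = 0`, `b₄ x = 0`, products of base classes of total degree `> 4` vanishing)
satisfies `(x+u)^k α = 0`, then `b₀ = b₂ = b₄ = 0`. -/
theorem stmt_12 {R : Type*} [CommRing R] (n k : ℕ) (hk1 : 1 ≤ k) (hk2 : k < n)
    (heven : Even (n - k))
    (x β₂ β₄ b₀ b₂ b₄ : R)
    (hx : x ^ 3 = 0) (hb2 : b₂ * x ^ 2 = 0) (hb4 : b₄ * x = 0)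
    (p : R[X]) (hp : p = X ^ (n + 1) - C β₂ * X ^ n - C β₄ * X ^ (n - 1))
    (h : ((AdjoinRoot.of p x + AdjoinRoot.root p) ^ k)
        * (AdjoinRoot.of p b₄ * AdjoinRoot.root p ^ ((n - k - 2) / 2)
            + AdjoinRoot.of p b₂ * AdjoinRoot.root p ^ ((n - k) / 2)
            + AdjoinRoot.of p b₀ * AdjoinRoot.root p ^ ((n - k + 2) / 2)) = 0) :
    b₀ = 0 ∧ b₂ = 0 ∧ b₄ = 0 := by
  rcases subsingleton_or_nontrivial R with hR | hR
  · exact ⟨Subsingleton.elim _ _, Subsingleton.elim _ _, Subsingleton.elim _ _⟩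
  obtain ⟨m, hm⟩ := heven
  have hm1 : 1 ≤ m := by omega
  obtain ⟨j, rfl⟩ : ∃ j, m = j + 1 := ⟨m - 1, by omega⟩
  have ha : (n - k - 2) / 2 = j := by omega
  have hb : (n - k) / 2 = j + 1 := by omega
  have hc : (n - k + 2) / 2 = j + 2 := by omega
  rw [ha, hb, hc] at h
  set q : R[X] := (C x + X) ^ k *
      (C b₄ * X ^ j + C b₂ * X ^ (j + 1) + C b₀ * X ^ (j + 2)) with hq
  have hmk : AdjoinRoot.mk p q = 0 := by
    rw [hq]
    simpa [map_add, map_mul, map_pow, AdjoinRoot.mk_C, AdjoinRoot.mk_X] using h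
  have hdvd : p ∣ q := (AdjoinRoot.mk_eq_zero).mp hmk
  have hpm : p.Monic := by
    rw [hp, sub_sub]
    apply monic_X_pow_sub
    apply lt_of_le_of_lt (degree_add_le _ _)
    have h1 : (C β₂ * X ^ n).degree ≤ (n : WithBot ℕ) := by compute_degree!
    have h2 : (C β₄ * X ^ (n - 1)).degree ≤ ((n - 1 : ℕ) : WithBot ℕ) := by compute_degree!
    have h3 : ((n - 1 : ℕ) : WithBot ℕ) ≤ (n : WithBot ℕ) := Nat.cast_le.mpr (by omega)
    calc (C β₂ * X ^ n).degree ⊔ (C β₄ * X ^ (n - 1)).degree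
        ≤ (n : WithBot ℕ) := sup_le h1 (le_trans h2 h3)
      _ < ((n + 1 : ℕ) : WithBot ℕ) := Nat.cast_lt.mpr (by omega)
  have hpn : p.natDegree = n + 1 := by
    rw [hp]
    compute_degree
    all_goals first
      | omega
      | simp [show n + 1 ≠ n - 1 from by omega]
  have hq0 : q = 0 := by
    obtain ⟨c, hcq⟩ := hdvd
    rcases eq_or_ne c 0 with rfl | hc0
    · simpa using hcq
    · exfalso
      have hdeg := hpm.natDegree_mul' hc0
      rw [← hcq, hpn] at hdeg
      have h2 : q.natDegree ≤ k + (j + 2) := by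
        rw [hq]; compute_degree
      omega
  rw [hq] at hq0
  have hmonic : ((C x + X) ^ k).Monic := by
    simpa [add_comm] using (monic_X_add_C x).pow k
  rw [hmonic.mul_right_eq_zero_iff] at hq0
  refine ⟨?_, ?_, ?_⟩
  · have := congrArg (fun f => Polynomial.coeff f (j + 2)) hq0
    simpa [coeff_X_pow] using this
  · have := congrArg (fun f => Polynomial.coeff f (j + 1)) hq0
    simpa [coeff_X_pow] using this
  · have := congrArg (fun f => Polynomial.coeff f j) hq0
    simpa [coeff_X_pow] using this
end

section
/- With the same graded ring (u^{n+1} = β₄ u^{n−1} + β₂ uⁿ), suppose b₀ ∈ H⁰(B) ≅ ℝ and b₂ ∈ H²(B) satisfy b₂·n·x + b₀·((n(n−1)/2)x² + β₄) = 0 and b₂ + b₀(n x + β₂) = 0. If β₄ − n β₂ x − (n(n+1)/2) x² ≠ 0 in H⁴(B), then b₀ = 0 and b₂ = 0. -/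
/-- Kernel computation for the Lefschetz map `Ωⁿ` on `H²(M)`: if `b₀ ∈ H⁰(B) ≅ ℝ`
and `b₂ ∈ H²(B)` satisfy `b₂·n·x + b₀·((n(n-1)/2)x² + β₄) = 0` and
`b₂ + b₀(n x + β₂) = 0`, and if `β₄ - n β₂ x - (n(n+1)/2) x² ≠ 0` in `H⁴(B)`,
then `b₀ = 0` and `b₂ = 0`. -/
theorem stmt_13 {R : Type*} [CommRing R] [Algebra ℝ R] (n : ℕ)
    (x β₂ β₄ b₂ : R) (b₀ : ℝ)
    (h1 : b₂ * ((n : ℝ) • x) + b₀ • (((n : ℝ) * ((n : ℝ) - 1) / 2) • x ^ 2 + β₄) = 0)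
    (h2 : b₂ + b₀ • ((n : ℝ) • x + β₂) = 0)
    (hne : β₄ - (n : ℝ) • (β₂ * x) - ((n : ℝ) * ((n : ℝ) + 1) / 2) • x ^ 2 ≠ 0) :
    b₀ = 0 ∧ b₂ = 0 := by
  have hb2 : b₂ = -(b₀ • ((n : ℝ) • x + β₂)) := by linear_combination h2
  have key : b₀ • (β₄ - (n : ℝ) • (β₂ * x) - ((n : ℝ) * ((n : ℝ) + 1) / 2) • x ^ 2) = 0 := by
    simp only [Algebra.smul_def, map_mul, map_add, map_sub, map_natCast] at h1 h2 ⊢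
    have h2' : b₂ = -(algebraMap ℝ R b₀ * ((n : R) * x + β₂)) := by linear_combination h2
    subst h2'
    have hsum : algebraMap ℝ R ((n:ℝ) * ((n:ℝ) + 1) / 2) + algebraMap ℝ R ((n:ℝ) * ((n:ℝ) - 1) / 2)
        = ((n : R)) ^ 2 := by
      rw [← map_add]
      have : ((n:ℝ) * ((n:ℝ) + 1) / 2 + (n:ℝ) * ((n:ℝ) - 1) / 2 : ℝ) = (n:ℝ) ^ 2 := by ring
      rw [this, map_pow, map_natCast]
    linear_combination h1 - algebraMap ℝ R b₀ * x ^ 2 * hsum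
  have hb0 : b₀ = 0 := by
    by_contra h
    apply hne
    have := congrArg (fun r => b₀⁻¹ • r) key
    simpa [smul_smul, inv_mul_cancel₀ h] using this
  subst hb0
  simp at h2 ⊢
  exact h2
end
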